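/- For every α ∈ (0,1], every function u satisfying the stated conditions, and every irrational x ∈ ℝ, B_{α,u}(x) < ∞ if and only if B_{1,u}(x) < ∞; that is, the set of (α,u)-Brjuno numbers does not depend on α ∈ (0,1]. -/

import Mathlib

open Set Filter
open scoped ENNReal

/-- The `α`-continued fraction map `A_α(x) = |1/x − ⌊1/x + 1 − α⌋|`.
For `α = 1` this is the Gauss map. -/
noncomputable def Aa (α : ℝ) (x : ℝ) : ℝ := |1 / x - ⌊1 / x + 1 - α⌋|

/-- `x_{α,0} = |x − ⌊x + 1 − α⌋|`. -/
noncomputable def xa0 (α x : ℝ) : ℝ := |x - ⌊x + 1 - α⌋|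

/-- The orbit `x_{α,n} = A_α^n(x_{α,0})`. -/
noncomputable def xfull (α x : ℝ) (n : ℕ) : ℝ := (Aa α)^[n] (xa0 α x)

/-- The `(α,u)`-Brjuno function `B_{α,u}(x) = ∑_{n≥0} β_{α,n−1}·u(x_{α,n}) ∈ [0,∞]`,
where `β_{α,n−1} = x_{α,0}⋯x_{α,n−1}` (`β_{α,-1} = 1`). -/
noncomputable def Bau (α : ℝ) (u : ℝ → ℝ) (x : ℝ) : ℝ≥0∞ :=
  ∑' n : ℕ, ENNReal.ofReal ((∏ i ∈ Finset.range n, xfull α x i) * u (xfull α x n))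

namespace BrjunoProof

noncomputable def gy (x : ℝ) (m : ℕ) : ℝ := xfull 1 x m
noncomputable def dg (x : ℝ) (m : ℕ) : ℕ := (⌊(gy x m)⁻¹⌋).toNat
noncomputable def Pb (x : ℝ) (m : ℕ) : ℝ := ∏ i ∈ Finset.range m, gy x i

lemma xfull_succ (α x : ℝ) (n : ℕ) : xfull α x (n+1) = Aa α (xfull α x n) :=
  Function.iterate_succ_apply' _ _ _

/-- The key absolute-value/floor evaluation. -/
lemma abs_floor_eval (α : ℝ) (hα : α ∈ Set.Ioc (0:ℝ) 1) (t : ℝ) (n : ℤ) (w : ℝ)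
    (ht : t = n + w) (hw : w ∈ Set.Ioo (0:ℝ) 1) :
    |t - ⌊t + 1 - α⌋| = if α ≤ w then 1 - w else w := by
  have h1 : t + 1 - α = (n : ℝ) + (w + 1 - α) := by rw [ht]; ring
  have h2 : ⌊t + 1 - α⌋ = n + ⌊w + 1 - α⌋ := by
    rw [h1, add_comm (n:ℝ), Int.floor_add_intCast, add_comm]
  by_cases hc : α ≤ w
  · have h3 : ⌊w + 1 - α⌋ = 1 := by
      rw [Int.floor_eq_iff]
      constructor
      · push_cast; linarith
      · push_cast; linarith [hw.2, hα.1]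
    rw [h2, h3, if_pos hc, ht]
    push_cast
    rw [show (n:ℝ) + w - ((n:ℝ) + 1) = -(1 - w) by ring, abs_neg, abs_of_nonneg (by linarith [hw.2])]
  · have h3 : ⌊w + 1 - α⌋ = 0 := by
      rw [Int.floor_eq_iff]
      constructor
      · push_cast; linarith [hw.1, hα.2]
      · push_cast; linarith [hc]
    rw [h2, h3, if_neg hc, ht]
    push_cast
    rw [add_zero, show (n:ℝ) + w - (n:ℝ) = w by ring, abs_of_nonneg (le_of_lt hw.1)]

lemma gy_zero (x : ℝ) : gy x 0 = Int.fract x := by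
  show xa0 1 x = _
  unfold xa0
  rw [show x + 1 - 1 = x by ring]
  rw [show x - (⌊x⌋:ℝ) = Int.fract x from rfl, abs_of_nonneg (Int.fract_nonneg x)]

lemma gy_succ (x : ℝ) (m : ℕ) : gy x (m+1) = Int.fract (gy x m)⁻¹ := by
  show xfull 1 x (m+1) = _
  rw [xfull_succ]
  show |1 / xfull 1 x m - ⌊1 / xfull 1 x m + 1 - 1⌋| = _
  rw [show 1 / xfull 1 x m + 1 - 1 = (xfull 1 x m)⁻¹ by rw [one_div]; ring, one_div]
  rw [show (xfull 1 x m)⁻¹ - (⌊(xfull 1 x m)⁻¹⌋:ℝ) = Int.fract (xfull 1 x m)⁻¹ from rfl,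
    abs_of_nonneg (Int.fract_nonneg _)]
  rfl

lemma irrational_fract {z : ℝ} (h : Irrational z) : Irrational (Int.fract z) := by
  have h2 := h.sub_intCast ⌊z⌋
  rw [Int.fract]
  exact h2

lemma fract_mem_Ioo {z : ℝ} (h : Irrational z) : Int.fract z ∈ Set.Ioo (0:ℝ) 1 := by
  refine ⟨lt_of_le_of_ne (Int.fract_nonneg z) ?_, Int.fract_lt_one z⟩
  intro h0
  exact (irrational_fract h).ne_int 0 (by rw [← h0]; norm_num)

lemma gy_irr_mem (x : ℝ) (hirr : Irrational x) (m : ℕ) :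
    Irrational (gy x m) ∧ gy x m ∈ Set.Ioo (0:ℝ) 1 := by
  induction m with
  | zero => rw [gy_zero]; exact ⟨irrational_fract hirr, fract_mem_Ioo hirr⟩
  | succ m ih =>
    rw [gy_succ]
    have hinv : Irrational (gy x m)⁻¹ := ih.1.inv
    exact ⟨irrational_fract hinv, fract_mem_Ioo hinv⟩


section Machine

variable (x : ℝ) (hirr : Irrational x)

lemma dg_eq (m : ℕ) (hirr : Irrational x) : (dg x m : ℤ) = ⌊(gy x m)⁻¹⌋ := by
  have h := gy_irr_mem x hirr m
  have h1 : (1:ℝ) < (gy x m)⁻¹ := (one_lt_inv₀ h.2.1).mpr h.2.2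
  have : (1:ℤ) ≤ ⌊(gy x m)⁻¹⌋ := by
    rw [Int.le_floor]; push_cast; exact le_of_lt h1
  exact Int.toNat_of_nonneg (by linarith)

lemma dg_pos (m : ℕ) (hirr : Irrational x) : 1 ≤ dg x m := by
  have h := gy_irr_mem x hirr m
  have h1 : (1:ℝ) < (gy x m)⁻¹ := (one_lt_inv₀ h.2.1).mpr h.2.2
  have : (1:ℤ) ≤ ⌊(gy x m)⁻¹⌋ := by rw [Int.le_floor]; push_cast; exact le_of_lt h1
  unfold dg
  omega

lemma dg_lt (m : ℕ) (hirr : Irrational x) : (dg x m : ℝ) < (gy x m)⁻¹ := by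
  have h := gy_irr_mem x hirr m
  have hfl : ((⌊(gy x m)⁻¹⌋ : ℤ) : ℝ) ≤ (gy x m)⁻¹ := Int.floor_le _
  have hne : ((⌊(gy x m)⁻¹⌋ : ℤ) : ℝ) ≠ (gy x m)⁻¹ := fun hh => (h.1.inv).ne_int _ hh.symm
  have : ((dg x m : ℤ) : ℝ) = ((⌊(gy x m)⁻¹⌋ : ℤ) : ℝ) := by rw [dg_eq x m hirr]
  push_cast at this
  rw [this]
  exact lt_of_le_of_ne hfl hne

lemma inv_lt_dg (m : ℕ) (hirr : Irrational x) : (gy x m)⁻¹ < dg x m + 1 := by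
  have hfl : (gy x m)⁻¹ < ⌊(gy x m)⁻¹⌋ + 1 := Int.lt_floor_add_one _
  have : ((dg x m : ℤ) : ℝ) = ((⌊(gy x m)⁻¹⌋ : ℤ) : ℝ) := by rw [dg_eq x m hirr]
  push_cast at this
  rw [this]
  exact hfl

lemma gy_succ_eq (m : ℕ) (hirr : Irrational x) :
    gy x (m+1) = (gy x m)⁻¹ - dg x m := by
  rw [gy_succ, Int.fract]
  congr 1
  rw [← dg_eq x m hirr]
  push_cast
  rfl

lemma dg_mul_lt_one (m : ℕ) (hirr : Irrational x) : (dg x m : ℝ) * gy x m < 1 := by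
  have h := gy_irr_mem x hirr m
  have h1 := dg_lt x m hirr
  calc (dg x m : ℝ) * gy x m < (gy x m)⁻¹ * gy x m := by
        apply mul_lt_mul_of_pos_right h1 h.2.1
    _ = 1 := inv_mul_cancel₀ (ne_of_gt h.2.1)

lemma gauss_id (m : ℕ) (hirr : Irrational x) :
    gy x m * gy x (m+1) = 1 - dg x m * gy x m := by
  have h := gy_irr_mem x hirr m
  rw [gy_succ_eq x m hirr, mul_sub, mul_inv_cancel₀ (ne_of_gt h.2.1)]
  ring

end Machine

noncomputable def Xs (x : ℝ) : ℕ × ℕ → ℝ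
  | (m, 0) => gy x m
  | (m, k+1) => (1 - ((k:ℝ)+1) * gy x m) / (1 - (k:ℝ) * gy x m)

noncomputable def Bp (x : ℝ) : ℕ × ℕ → ℝ
  | (m, 0) => Pb x m
  | (m, k+1) => Pb x m * (1 - (k:ℝ) * gy x m)

noncomputable def stepF (α x : ℝ) : ℕ × ℕ → ℕ × ℕ
  | (m, 0) => if α ≤ gy x (m+1) then (m+1, 1) else (m+1, 0)
  | (m, k+1) => if k + 2 ≤ dg x m then (m, k+2)
      else if α ≤ gy x (m+2) then (m+2, 1) else (m+2, 0)

noncomputable def st (α x : ℝ) : ℕ → ℕ × ℕ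
  | 0 => if α ≤ gy x 0 then (0, 1) else (0, 0)
  | n+1 => stepF α x (st α x n)

namespace Inv

lemma Aa_def (α z : ℝ) : Aa α z = |1/z - ⌊1/z + 1 - α⌋| := rfl

lemma xfull_zero_eval (α x : ℝ) (hα : α ∈ Set.Ioc (0:ℝ) 1) (hirr : Irrational x) :
    xfull α x 0 = if α ≤ gy x 0 then 1 - gy x 0 else gy x 0 := by
  show xa0 α x = _
  unfold xa0
  exact abs_floor_eval α hα x ⌊x⌋ (gy x 0)
    (by rw [gy_zero]; exact (Int.floor_add_fract x).symm)
    (by rw [gy_zero]; exact fract_mem_Ioo hirr)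

lemma stepA (α x : ℝ) (hα : α ∈ Set.Ioc (0:ℝ) 1) (hirr : Irrational x) (m : ℕ) :
    Aa α (gy x m) = if α ≤ gy x (m+1) then 1 - gy x (m+1) else gy x (m+1) := by
  have h := gy_irr_mem x hirr m
  rw [Aa_def]
  exact abs_floor_eval α hα (1 / gy x m) (dg x m) (gy x (m+1))
    (by rw [gy_succ_eq x m hirr, one_div]; push_cast; ring)
    ((gy_irr_mem x hirr (m+1)).2)

lemma stepMid (α x : ℝ) (hα : α ∈ Set.Ioc (0:ℝ) 1) (hirr : Irrational x) (m k : ℕ)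
    (hay : α ≤ gy x m) (hk : k + 2 ≤ dg x m) :
    Aa α ((1 - ((k:ℝ)+1) * gy x m) / (1 - (k:ℝ) * gy x m))
      = (1 - ((k:ℝ)+2) * gy x m) / (1 - ((k:ℝ)+1) * gy x m) := by
  have h := gy_irr_mem x hirr m
  set y := gy x m with hy
  have hy0 : 0 < y := h.2.1
  have hy1 : y < 1 := h.2.2
  have hdg : (dg x m : ℝ) * y < 1 := dg_mul_lt_one x m hirr
  have hk2 : ((k:ℝ) + 2) ≤ (dg x m : ℝ) := by exact_mod_cast hk
  have hknn : (0:ℝ) ≤ (k:ℝ) := Nat.cast_nonneg k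
  have hc2 : 0 < 1 - ((k:ℝ)+2) * y := by nlinarith
  have hc1 : 0 < 1 - ((k:ℝ)+1) * y := by nlinarith
  have hc0 : 0 < 1 - (k:ℝ) * y := by nlinarith
  set w := y / (1 - ((k:ℝ)+1) * y) with hw
  have hwpos : 0 < w := div_pos hy0 hc1
  have hwlt : w < 1 := by
    rw [hw, div_lt_one hc1]; nlinarith
  have haw : α ≤ w := by
    have h1 : y ≤ w := by
      rw [hw, le_div_iff₀ hc1]
      nlinarith [mul_nonneg (mul_nonneg (by linarith : (0:ℝ) ≤ (k:ℝ)+1) hy0.le) hy0.le]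
    linarith
  rw [Aa_def]
  have hinv : 1 / ((1 - ((k:ℝ)+1) * y) / (1 - (k:ℝ) * y)) = ((1:ℤ):ℝ) + w := by
    rw [one_div, inv_div, hw]
    push_cast
    rw [eq_comm, one_add_div hc1.ne']; congr 1; ring
  rw [abs_floor_eval α hα _ 1 w hinv ⟨hwpos, hwlt⟩, if_pos haw, hw]
  rw [one_sub_div hc1.ne']; congr 1; ring

lemma stepExitVal (x : ℝ) (hirr : Irrational x) (m k : ℕ) (hk : k + 1 = dg x m) :
    (1 - ((k:ℝ)+1) * gy x m) / (1 - (k:ℝ) * gy x m)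
      = gy x (m+1) / (1 + gy x (m+1)) := by
  have h := gy_irr_mem x hirr m
  have h' := gy_irr_mem x hirr (m+1)
  have hg := gauss_id x m hirr
  have hkc : ((k:ℝ)+1) = (dg x m : ℝ) := by exact_mod_cast hk
  have hnum : 1 - ((k:ℝ)+1) * gy x m = gy x m * gy x (m+1) := by rw [hkc, hg]
  have hden : 1 - (k:ℝ) * gy x m = gy x m * (1 + gy x (m+1)) := by
    have hq : (k:ℝ) = (dg x m : ℝ) - 1 := by rw [← hkc]; ring
    rw [hq]
    nlinarith [hg]
  rw [hnum, hden, mul_comm (gy x m) (1 + gy x (m+1)),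
    mul_comm (gy x m) (gy x (m+1)),
    mul_div_mul_right _ _ (ne_of_gt h.2.1)]

lemma stepExit (α x : ℝ) (hα : α ∈ Set.Ioc (0:ℝ) 1) (hirr : Irrational x) (m : ℕ) :
    Aa α (gy x (m+1) / (1 + gy x (m+1)))
      = if α ≤ gy x (m+2) then 1 - gy x (m+2) else gy x (m+2) := by
  have h' := gy_irr_mem x hirr (m+1)
  have h'' := gy_irr_mem x hirr (m+2)
  rw [Aa_def]
  refine abs_floor_eval α hα _ (1 + dg x (m+1)) (gy x (m+2)) ?_ h''.2
  have hstep : gy x (m+2) = (gy x (m+1))⁻¹ - dg x (m+1) := gy_succ_eq x (m+1) hirr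
  have hne : gy x (m+1) ≠ 0 := ne_of_gt h'.2.1
  rw [hstep, one_div, inv_div]
  push_cast
  field_simp
  ring

end Inv

open Inv

lemma Xs_zero (x : ℝ) (m : ℕ) : Xs x (m,0) = gy x m := rfl
lemma Xs_succ (x : ℝ) (m k : ℕ) :
    Xs x (m,k+1) = (1 - ((k:ℝ)+1) * gy x m) / (1 - (k:ℝ) * gy x m) := rfl
lemma Xs_one (x : ℝ) (m : ℕ) : Xs x (m,1) = 1 - gy x m := by
  rw [show (1:ℕ) = 0 + 1 from rfl, Xs_succ]
  norm_num
lemma Bp_zero (x : ℝ) (m : ℕ) : Bp x (m,0) = Pb x m := rfl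
lemma Bp_succ (x : ℝ) (m k : ℕ) : Bp x (m,k+1) = Pb x m * (1 - (k:ℝ) * gy x m) := rfl
lemma Bp_one (x : ℝ) (m : ℕ) : Bp x (m,1) = Pb x m := by
  rw [show (1:ℕ) = 0 + 1 from rfl, Bp_succ]
  norm_num
lemma Pb_succ (x : ℝ) (m : ℕ) : Pb x (m+1) = Pb x m * gy x m :=
  Finset.prod_range_succ _ _

lemma kg_lt_one (x : ℝ) (hirr : Irrational x) (m k : ℕ) (hk : k ≤ dg x m) :
    (k:ℝ) * gy x m < 1 := by
  have h := gy_irr_mem x hirr m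
  have hdg := dg_mul_lt_one x m hirr
  have hkc : (k:ℝ) ≤ (dg x m : ℝ) := by exact_mod_cast hk
  nlinarith [h.2.1]

lemma invariant (α x : ℝ) (hα : α ∈ Set.Ioc (0:ℝ) 1) (hirr : Irrational x) (n : ℕ) :
    xfull α x n = Xs x (st α x n) ∧
    (∏ i ∈ Finset.range n, xfull α x i) = Bp x (st α x n) ∧
    (∀ m k, st α x n = (m, k+1) → α ≤ gy x m ∧ k+1 ≤ dg x m) ∧
    (∀ m, st α x n = (m, 0) → gy x m < α) := by
  induction n with
  | zero =>
    show xa0 α x = _ ∧ _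
    by_cases h0 : α ≤ gy x 0
    · have hst : st α x 0 = (0,1) := by unfold st; rw [if_pos h0]
      rw [hst]
      refine ⟨?_, ?_, ?_, ?_⟩
      · rw [Xs_one]
        have := xfull_zero_eval α x hα hirr
        rw [if_pos h0] at this
        exact this
      · rw [Bp_one]; simp [Pb]
      · intro m k hmk
        injection hmk with hm2 hk2
        subst hm2
        have : k = 0 := by omega
        subst this
        exact ⟨h0, dg_pos x 0 hirr⟩
      · intro m hmk; injection hmk with _ hk2; exact absurd hk2 (by omega)
    · have hst : st α x 0 = (0,0) := by unfold st; rw [if_neg h0]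
      rw [hst]
      refine ⟨?_, ?_, ?_, ?_⟩
      · rw [Xs_zero]
        have := xfull_zero_eval α x hα hirr
        rw [if_neg h0] at this
        exact this
      · rw [Bp_zero]
        simp [Pb]
      · intro m k hmk; injection hmk with _ hk2; exact absurd hk2 (by omega)
      · intro m hmk; injection hmk with hm2 _; subst hm2; exact lt_of_not_ge h0
  | succ n ih =>
    obtain ⟨h1, h2, h3, h4⟩ := ih
    have hx1 : xfull α x (n+1) = Aa α (xfull α x n) := xfull_succ α x n
    have hprod : (∏ i ∈ Finset.range (n+1), xfull α x i)
        = (∏ i ∈ Finset.range n, xfull α x i) * xfull α x n := Finset.prod_range_succ _ _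
    have hstep : st α x (n+1) = stepF α x (st α x n) := rfl
    rcases hs : st α x n with ⟨m, k⟩
    rw [hs] at h1 h2 hstep
    obtain _ | k := k
    · -- previous state (m, 0)
      have hF : stepF α x (m,0) = if α ≤ gy x (m+1) then (m+1,1) else (m+1,0) := rfl
      have hA := stepA α x hα hirr m
      by_cases hc : α ≤ gy x (m+1)
      · have hst' : st α x (n+1) = (m+1,1) := by rw [hstep, hF, if_pos hc]
        refine ⟨?_, ?_, ?_, ?_⟩
        · rw [hst', Xs_one, hx1, h1, Xs_zero, hA, if_pos hc]
        · rw [hst', Bp_one, hprod, h2, h1, Xs_zero, Bp_zero, ← Pb_succ]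
        · rw [hst']
          intro m' k' hmk
          injection hmk with hm2 hk2
          have hk0 : k' = 0 := by omega
          subst hm2; subst hk0
          exact ⟨hc, dg_pos x (m+1) hirr⟩
        · rw [hst']
          intro m' hmk
          injection hmk with _ hk2
          exact absurd hk2 (by omega)
      · have hst' : st α x (n+1) = (m+1,0) := by rw [hstep, hF, if_neg hc]
        refine ⟨?_, ?_, ?_, ?_⟩
        · rw [hst', Xs_zero, hx1, h1, Xs_zero, hA, if_neg hc]
        · rw [hst', Bp_zero, hprod, h2, h1, Xs_zero, Bp_zero, ← Pb_succ]
        · rw [hst']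
          intro m' k' hmk
          injection hmk with _ hk2
          exact absurd hk2 (by omega)
        · rw [hst']
          intro m' hmk
          injection hmk with hm2 _
          subst hm2
          exact lt_of_not_ge hc
    · -- previous state (m, k+1)
      obtain ⟨hay, hk1⟩ := h3 m k hs
      have h := gy_irr_mem x hirr m
      have hkg : (k:ℝ) * gy x m < 1 := kg_lt_one x hirr m k (by omega)
      have hne0 : (1 - (k:ℝ) * gy x m) ≠ 0 := ne_of_gt (by linarith)
      have hF : stepF α x (m,k+1) = if k + 2 ≤ dg x m then (m,k+2)
          else if α ≤ gy x (m+2) then (m+2,1) else (m+2,0) := rfl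
      by_cases hc : k + 2 ≤ dg x m
      · have hst' : st α x (n+1) = (m, k+2) := by rw [hstep, hF, if_pos hc]
        refine ⟨?_, ?_, ?_, ?_⟩
        · rw [hst', hx1, h1, Xs_succ, stepMid α x hα hirr m k hay hc, Xs_succ]
          push_cast
          ring_nf
        · rw [hst', hprod, h2, h1, Bp_succ, Xs_succ, Bp_succ]
          push_cast
          field_simp
        · rw [hst']
          intro m' k' hmk
          injection hmk with hm2 hk2
          subst hm2
          have hk0 : k' = k + 1 := by omega
          subst hk0
          exact ⟨hay, by omega⟩
        · rw [hst']
          intro m' hmk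
          injection hmk with _ hk2
          exact absurd hk2 (by omega)
      · have hdk : k + 1 = dg x m := by omega
        have hkc : ((k:ℝ)+1) = (dg x m : ℝ) := by exact_mod_cast hdk
        have hval : Xs x (m,k+1) = gy x (m+1)/(1+gy x (m+1)) := by
          rw [Xs_succ]; exact stepExitVal x hirr m k hdk
        have hAa : Aa α (xfull α x n)
            = if α ≤ gy x (m+2) then 1 - gy x (m+2) else gy x (m+2) := by
          rw [h1, hval]; exact stepExit α x hα hirr m
        have hprod2 : (∏ i ∈ Finset.range (n+1), xfull α x i) = Pb x (m+2) := by
          rw [hprod, h2, h1, Bp_succ, Xs_succ]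
          calc Pb x m * (1 - (k:ℝ) * gy x m)
                * ((1 - ((k:ℝ)+1) * gy x m) / (1 - (k:ℝ) * gy x m))
              = Pb x m * (1 - ((k:ℝ)+1) * gy x m) := by field_simp
            _ = Pb x m * (gy x m * gy x (m+1)) := by rw [hkc, gauss_id x m hirr]
            _ = Pb x (m+2) := by rw [Pb_succ, Pb_succ]; ring
        by_cases hc2 : α ≤ gy x (m+2)
        · have hst' : st α x (n+1) = (m+2,1) := by rw [hstep, hF, if_neg hc, if_pos hc2]
          refine ⟨?_, ?_, ?_, ?_⟩
          · rw [hst', Xs_one, hx1, hAa, if_pos hc2]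
          · rw [hst', Bp_one, hprod2]
          · rw [hst']
            intro m' k' hmk
            injection hmk with hm2 hk2
            have hk0 : k' = 0 := by omega
            subst hm2; subst hk0
            exact ⟨hc2, dg_pos x (m+2) hirr⟩
          · rw [hst']
            intro m' hmk
            injection hmk with _ hk2
            exact absurd hk2 (by omega)
        · have hst' : st α x (n+1) = (m+2,0) := by rw [hstep, hF, if_neg hc, if_neg hc2]
          refine ⟨?_, ?_, ?_, ?_⟩
          · rw [hst', Xs_zero, hx1, hAa, if_neg hc2]
          · rw [hst', Bp_zero, hprod2]
          · rw [hst']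
            intro m' k' hmk
            injection hmk with _ hk2
            exact absurd hk2 (by omega)
          · rw [hst']
            intro m' hmk
            injection hmk with hm2 _
            subst hm2
            exact lt_of_not_ge hc2

lemma st_strict (α x : ℝ) (n : ℕ) :
    (toLex (st α x n) : ℕ ×ₗ ℕ) < toLex (st α x (n+1)) := by
  rw [Prod.Lex.lt_iff]
  have hstep : st α x (n+1) = stepF α x (st α x n) := rfl
  rcases hs : st α x n with ⟨m, k⟩
  rw [hs] at hstep
  obtain _ | k := k
  · have hF : stepF α x (m,0) = if α ≤ gy x (m+1) then (m+1,1) else (m+1,0) := rfl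
    rw [hstep, hF]
    split_ifs <;> left <;> simp
  · have hF : stepF α x (m,k+1) = if k + 2 ≤ dg x m then (m,k+2)
        else if α ≤ gy x (m+2) then (m+2,1) else (m+2,0) := rfl
    rw [hstep, hF]
    split_ifs with h1 h2
    · right; exact ⟨rfl, by show k + 1 < k + 2; omega⟩
    · left; simp
    · left; simp
lemma st_injective (α x : ℝ) : Function.Injective (st α x) := by
  have hmono : StrictMono (fun n => (toLex (st α x n) : ℕ ×ₗ ℕ)) :=
    strictMono_nat_of_lt_succ (st_strict α x)
  intro a b hab
  exact hmono.injective (by simpa using congrArg toLex hab)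

/-- chain: from a B-state one reaches the top of the block. -/
lemma chain (α x : ℝ) (m : ℕ) :
    ∀ j k n, st α x n = (m, k) → 1 ≤ k → k + j = dg x m →
      ∃ n', st α x n' = (m, dg x m) := by
  intro j
  induction j with
  | zero =>
    intro k n hn _ hkd
    obtain rfl : k = dg x m := by omega
    exact ⟨n, hn⟩
  | succ j ih =>
    intro k n hn hk1 hkd
    obtain ⟨k, rfl⟩ : ∃ k', k = k' + 1 := ⟨k - 1, by omega⟩
    have hF : stepF α x (m,k+1) = if k + 2 ≤ dg x m then (m,k+2)
        else if α ≤ gy x (m+2) then (m+2,1) else (m+2,0) := rfl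
    have hn1 : st α x (n+1) = (m, k+2) := by
      show stepF α x (st α x n) = _
      rw [hn, hF, if_pos (by omega)]
    exact ih (k+2) (n+1) hn1 (by omega) (by omega)

lemma reach (α x : ℝ) (hirr : Irrational x) : ∀ m : ℕ,
    (∃ n, st α x n = (m, 0) ∨ st α x n = (m, 1)) ∨
    (1 ≤ m ∧ ∃ n, st α x n = (m - 1, dg x (m-1))) := by
  intro m
  induction m with
  | zero =>
    left
    refine ⟨0, ?_⟩
    have hst : st α x 0 = if α ≤ gy x 0 then ((0:ℕ),(1:ℕ)) else (0,0) := rfl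
    rw [hst]
    split_ifs
    · right; rfl
    · left; rfl
  | succ m ih =>
    rcases ih with ⟨n, hn | hn⟩ | ⟨hm1, n, hn⟩
    · left
      refine ⟨n+1, ?_⟩
      have : st α x (n+1) = stepF α x (m, 0) := by
        show stepF α x (st α x n) = _; rw [hn]
      have hF : stepF α x (m,0) = if α ≤ gy x (m+1) then (m+1,1) else (m+1,0) := rfl
      rw [this, hF]
      split_ifs
      · right; rfl
      · left; rfl
    · right
      refine ⟨by omega, ?_⟩
      have := chain α x m (dg x m - 1) 1 n hn le_rfl (by
        have := dg_pos x m hirr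
        omega)
      simpa using this
    · left
      obtain ⟨k, hdk⟩ : ∃ k, dg x (m-1) = k + 1 :=
        ⟨dg x (m-1) - 1, by have := dg_pos x (m-1) hirr; omega⟩
      refine ⟨n+1, ?_⟩
      have h1 : st α x (n+1) = stepF α x (m-1, k+1) := by
        show stepF α x (st α x n) = _; rw [hn, hdk]
      have hF : stepF α x (m-1,k+1) = if k + 2 ≤ dg x (m-1) then (m-1,k+2)
          else if α ≤ gy x (m-1+2) then (m-1+2,1) else (m-1+2,0) := rfl
      rw [h1, hF, if_neg (by omega)]
      have hm2 : m - 1 + 2 = m + 1 := by omega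
      rw [hm2]
      split_ifs
      · right; rfl
      · left; rfl

lemma gy_mul_le_half (x : ℝ) (hirr : Irrational x) (m : ℕ) :
    gy x m * gy x (m+1) ≤ 1/2 := by
  have h := gy_irr_mem x hirr m
  have h' := gy_irr_mem x hirr (m+1)
  by_cases hy : gy x m ≤ 1/2
  · nlinarith [h.2.1, h'.2.1, h'.2.2]
  · have hd1 : (1:ℝ) ≤ (dg x m : ℝ) := by exact_mod_cast dg_pos x m hirr
    have := gauss_id x m hirr
    nlinarith [dg_mul_lt_one x m hirr, h.2.1]

lemma Pb_pos (x : ℝ) (hirr : Irrational x) (m : ℕ) : 0 < Pb x m := by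
  apply Finset.prod_pos
  intro i _
  exact (gy_irr_mem x hirr i).2.1

lemma Pb_le_one (x : ℝ) (hirr : Irrational x) (m : ℕ) : Pb x m ≤ 1 := by
  apply Finset.prod_le_one
  · intro i _; exact (gy_irr_mem x hirr i).2.1.le
  · intro i _; exact (gy_irr_mem x hirr i).2.2.le

lemma Pb_mono (x : ℝ) (hirr : Irrational x) (m : ℕ) : Pb x (m+1) ≤ Pb x m := by
  rw [Pb_succ]
  nlinarith [Pb_pos x hirr m, (gy_irr_mem x hirr m).2.1, (gy_irr_mem x hirr m).2.2]

lemma Pb_decay (x : ℝ) (hirr : Irrational x) (m : ℕ) :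
    Pb x m ≤ 2 * (Real.sqrt 2⁻¹) ^ m := by
  induction m using Nat.strong_induction_on with
  | _ m ih =>
    have hr0 : (0:ℝ) < Real.sqrt 2⁻¹ := Real.sqrt_pos.mpr (by norm_num)
    have hr2 : (Real.sqrt 2⁻¹) ^ 2 = 2⁻¹ := Real.sq_sqrt (by norm_num)
    match m with
    | 0 => simp [Pb]
    | 1 =>
      have h0 := gy_irr_mem x hirr 0
      have : Pb x 1 = gy x 0 := by rw [show (1:ℕ) = 0 + 1 from rfl, Pb_succ]; simp [Pb]
      rw [this]
      nlinarith [h0.2.2, h0.2.1]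
    | (m+2) =>
      have hPm := ih m (by omega)
      have hPp : Pb x (m+2) = Pb x m * (gy x m * gy x (m+1)) := by
        rw [Pb_succ, Pb_succ]; ring
      have hhalf := gy_mul_le_half x hirr m
      have hpos := Pb_pos x hirr m
      have hprodpos : 0 < gy x m * gy x (m+1) :=
        mul_pos (gy_irr_mem x hirr m).2.1 (gy_irr_mem x hirr (m+1)).2.1
      have hpow : (Real.sqrt 2⁻¹) ^ (m+2) = (Real.sqrt 2⁻¹) ^ m * 2⁻¹ := by
        rw [pow_add, hr2]
      rw [hPp, hpow]
      have h1 : Pb x m * (gy x m * gy x (m+1)) ≤ Pb x m * (1/2) := by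
        apply mul_le_mul_of_nonneg_left hhalf hpos.le
      have h2 : Pb x m * (1/2) ≤ 2 * (Real.sqrt 2⁻¹)^m * (1/2) := by
        nlinarith
      calc Pb x m * (gy x m * gy x (m+1)) ≤ Pb x m * (1/2) := h1
        _ ≤ 2 * (Real.sqrt 2⁻¹)^m * (1/2) := h2
        _ = 2 * ((Real.sqrt 2⁻¹)^m * 2⁻¹) := by ring

lemma Sb_lt_top (x : ℝ) (hirr : Irrational x) :
    (∑' m : ℕ, ENNReal.ofReal (Pb x m)) < ⊤ := by
  have hr0 : (0:ℝ) < Real.sqrt 2⁻¹ := Real.sqrt_pos.mpr (by norm_num)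
  have hr1 : Real.sqrt 2⁻¹ < 1 := by
    rw [show (1:ℝ) = Real.sqrt 1 from (Real.sqrt_one).symm]
    exact Real.sqrt_lt_sqrt (by norm_num) (by norm_num)
  have hbound : ∀ m : ℕ, ENNReal.ofReal (Pb x m)
      ≤ ENNReal.ofReal 2 * (ENNReal.ofReal (Real.sqrt 2⁻¹)) ^ m := by
    intro m
    rw [← ENNReal.ofReal_pow hr0.le, ← ENNReal.ofReal_mul (by norm_num)]
    exact ENNReal.ofReal_le_ofReal (Pb_decay x hirr m)
  calc (∑' m : ℕ, ENNReal.ofReal (Pb x m))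
      ≤ ∑' m : ℕ, ENNReal.ofReal 2 * (ENNReal.ofReal (Real.sqrt 2⁻¹)) ^ m :=
        ENNReal.tsum_le_tsum hbound
    _ = ENNReal.ofReal 2 * ∑' m : ℕ, (ENNReal.ofReal (Real.sqrt 2⁻¹)) ^ m :=
        ENNReal.tsum_mul_left
    _ = ENNReal.ofReal 2 * (1 - ENNReal.ofReal (Real.sqrt 2⁻¹))⁻¹ := by
        rw [ENNReal.tsum_geometric]
    _ < ⊤ := by
        apply ENNReal.mul_lt_top ENNReal.ofReal_lt_top
        rw [ENNReal.inv_lt_top, tsub_pos_iff_lt]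
        rw [← ENNReal.ofReal_one]
        exact (ENNReal.ofReal_lt_ofReal_iff_of_nonneg hr0.le).mpr hr1

lemma sup_bound (u : ℝ → ℝ) (hcont : ContinuousOn u (Set.Ioc 0 1))
    (c : ℝ) (hc : 0 < c) (hc1 : c ≤ 1) :
    ∃ M, 0 ≤ M ∧ ∀ t, c ≤ t → t ≤ 1 → |u t| ≤ M := by
  obtain ⟨M, hM⟩ := (isCompact_Icc (a := c) (b := 1)).exists_bound_of_continuousOn
    (hcont.mono (fun t ht => ⟨lt_of_lt_of_le hc ht.1, ht.2⟩))
  refine ⟨max M 0, le_max_right _ _, fun t ht1 ht2 => ?_⟩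
  have := hM t ⟨ht1, ht2⟩
  rw [Real.norm_eq_abs] at this
  exact le_trans this (le_max_left _ _)

lemma u_comp (u : ℝ → ℝ) (hcont : ContinuousOn u (Set.Ioc 0 1))
    (hC1 : ContDiffOn ℝ 1 u (Set.Ioo 0 1))
    (hx2u : ∃ L : ℝ, Tendsto (fun y => y ^ 2 * deriv u y) (nhdsWithin 0 (Set.Ioi 0)) (nhds L)) :
    ∃ C, 0 ≤ C ∧ ∀ z, 0 < z → z < 1 → |u (z/(1+z)) - u z| ≤ C := by
  obtain ⟨L, hL⟩ := hx2u
  have hev : ∀ᶠ y in nhdsWithin 0 (Set.Ioi 0), |y ^ 2 * deriv u y - L| < 1 := by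
    have := Metric.tendsto_nhds.mp hL 1 one_pos
    simpa [Real.dist_eq] using this
  rw [eventually_nhdsWithin_iff] at hev
  rw [Metric.eventually_nhds_iff] at hev
  obtain ⟨δ, hδ, hδ2⟩ := hev
  set t₀ : ℝ := min (δ/2) (1/2) with ht₀def
  have ht₀pos : 0 < t₀ := lt_min (by linarith) (by norm_num)
  have ht₀δ : t₀ < δ := lt_of_le_of_lt (min_le_left _ _) (by linarith)
  have ht₀half : t₀ ≤ 1/2 := min_le_right _ _
  set K0 : ℝ := |L| + 1 with hK0def
  have hK0 : 0 ≤ K0 := by positivity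
  have hderiv : ∀ t, 0 < t → t < t₀ → |deriv u t| ≤ K0 / t^2 := by
    intro t ht htt
    have hd : dist t 0 < δ := by
      rw [Real.dist_eq, sub_zero, abs_of_pos ht]; linarith
    have := hδ2 hd (Set.mem_Ioi.mpr ht)
    have habs : |t^2 * deriv u t| ≤ K0 := by
      calc |t^2 * deriv u t| ≤ |t^2 * deriv u t - L| + |L| := by
            have := abs_sub_abs_le_abs_sub (t^2 * deriv u t) L
            have h2 := abs_sub (t^2*deriv u t) L
            calc |t^2 * deriv u t| = |(t^2*deriv u t - L) + L| := by ring_nf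
              _ ≤ |t^2*deriv u t - L| + |L| := abs_add_le _ _
        _ ≤ K0 := by rw [hK0def]; linarith
    rw [abs_mul, abs_of_pos (by positivity : (0:ℝ) < t^2)] at habs
    rw [le_div_iff₀ (by positivity : (0:ℝ) < t^2)]
    linarith [habs]
  obtain ⟨M, hM0, hM⟩ := sup_bound u hcont (t₀/2) (by positivity) (by linarith)
  refine ⟨4*K0 + 2*M, by positivity, fun z hz0 hz1 => ?_⟩
  set w : ℝ := z/(1+z) with hwdef
  have h1z : (0:ℝ) < 1 + z := by linarith
  have hw0 : 0 < w := div_pos hz0 h1z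
  have hwz : w ≤ z := by
    rw [hwdef, div_le_iff₀ h1z]; nlinarith
  have hwhalf : z/2 ≤ w := by
    rw [hwdef, div_le_div_iff₀ (by norm_num) h1z]; nlinarith
  by_cases hz : z < t₀
  · -- small z : use derivative bound
    have hzsq : (0:ℝ) < z^2 := by positivity
    have hdiff : ∀ t ∈ Set.Icc w z, DifferentiableAt ℝ u t := by
      intro t ht
      have htIoo : t ∈ Set.Ioo (0:ℝ) 1 := ⟨lt_of_lt_of_le hw0 ht.1, lt_of_le_of_lt ht.2 hz1⟩
      exact (hC1.differentiableOn one_ne_zero).differentiableAt (isOpen_Ioo.mem_nhds htIoo)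
    have hbound : ∀ t ∈ Set.Icc w z, ‖deriv u t‖ ≤ 4*K0/z^2 := by
      intro t ht
      have ht0 : 0 < t := lt_of_lt_of_le hw0 ht.1
      have htt0 : t < t₀ := lt_of_le_of_lt ht.2 hz
      have h1 := hderiv t ht0 htt0
      rw [Real.norm_eq_abs]
      have hts : z^2/4 ≤ t^2 := by nlinarith [ht.1, hwhalf, ht0]
      calc |deriv u t| ≤ K0/t^2 := h1
        _ ≤ K0/(z^2/4) := by
            apply div_le_div_of_nonneg_left hK0 (by positivity) hts
        _ = 4*K0/z^2 := by field_simp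
    have key := (convex_Icc w z).norm_image_sub_le_of_norm_deriv_le hdiff hbound
      (Set.left_mem_Icc.mpr hwz) (Set.right_mem_Icc.mpr hwz)
    rw [Real.norm_eq_abs, Real.norm_eq_abs] at key
    have hzw : z - w ≤ z^2 := by
      have : w * (1+z) = z := by rw [hwdef]; field_simp
      nlinarith [hw0]
    have habs2 : |u w - u z| = |u z - u w| := abs_sub_comm _ _
    rw [habs2]
    calc |u z - u w| ≤ 4*K0/z^2 * |z - w| := key
      _ = 4*K0/z^2 * (z - w) := by rw [abs_of_nonneg (by linarith)]
      _ ≤ 4*K0/z^2 * z^2 := by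
          apply mul_le_mul_of_nonneg_left hzw (by positivity)
      _ = 4*K0 := by field_simp
      _ ≤ 4*K0 + 2*M := by linarith
  · -- large z : use sup bound
    push_neg at hz
    have hwt : t₀/2 ≤ w := le_trans (by linarith) hwhalf
    have h1 := hM w hwt (by nlinarith)
    have h2 := hM z (by linarith) hz1.le
    calc |u w - u z| ≤ |u w| + |u z| := abs_sub _ _
      _ ≤ M + M := add_le_add h1 h2
      _ ≤ 4*K0 + 2*M := by linarith

section Directions

variable (α x : ℝ) (u : ℝ → ℝ)

/-- `m`-th term of the Gauss-orbit (α = 1) Brjuno sum. -/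
noncomputable def Tm (x : ℝ) (u : ℝ → ℝ) (m : ℕ) : ℝ≥0∞ :=
  ENNReal.ofReal (Pb x m * u (gy x m))

lemma Bau_one_eq : Bau 1 u x = ∑' m, Tm x u m := rfl

lemma Bau_eq_termA :
    Bau α u x = ∑' n, ENNReal.ofReal ((∏ i ∈ Finset.range n, xfull α x i) * u (xfull α x n)) := rfl

lemma termA_eq (hα : α ∈ Set.Ioc (0:ℝ) 1) (hirr : Irrational x) (n : ℕ) :
    ENNReal.ofReal ((∏ i ∈ Finset.range n, xfull α x i) * u (xfull α x n))
      = ENNReal.ofReal (Bp x (st α x n) * u (Xs x (st α x n))) := by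
  obtain ⟨h1, h2, -, -⟩ := invariant α x hα hirr n
  rw [h1, h2]

/-- The mid-state value is in `[1/2, 1]`. -/
lemma mid_val_mem (hirr : Irrational x) (m k : ℕ) (hk : k + 2 ≤ dg x m) :
    Xs x (m, k+1) ∈ Set.Ioc (0:ℝ) 1 ∧ (1:ℝ)/2 ≤ Xs x (m, k+1) := by
  have h := gy_irr_mem x hirr m
  have hy0 := h.2.1
  have hkg : ((k:ℝ)+2) * gy x m < 1 := by
    have := kg_lt_one x hirr m (k+2) hk
    push_cast at this
    convert this using 2 <;> push_cast <;> ring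
  have hc1 : 0 < 1 - ((k:ℝ)+1) * gy x m := by nlinarith [Nat.cast_nonneg (α := ℝ) k]
  have hc0 : 0 < 1 - (k:ℝ) * gy x m := by nlinarith [Nat.cast_nonneg (α := ℝ) k]
  rw [Xs_succ]
  refine ⟨⟨div_pos hc1 hc0, ?_⟩, ?_⟩
  · rw [div_le_one hc0]; nlinarith
  · rw [le_div_iff₀ hc0]; nlinarith

/-- Exit-state identities. -/
lemma exit_val (hirr : Irrational x) (m k : ℕ) (hdk : k + 1 = dg x m) :
    Xs x (m, k+1) = gy x (m+1) / (1 + gy x (m+1)) ∧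
    Bp x (m, k+1) = Pb x m * (gy x m * (1 + gy x (m+1))) := by
  constructor
  · rw [Xs_succ]; exact Inv.stepExitVal x hirr m k hdk
  · rw [Bp_succ]
    congr 1
    have h := gy_irr_mem x hirr m
    have hg := gauss_id x m hirr
    have hkc : ((k:ℝ)+1) = (dg x m : ℝ) := by exact_mod_cast hdk
    have hq : (k:ℝ) = (dg x m : ℝ) - 1 := by rw [← hkc]; ring
    rw [hq]
    nlinarith [hg]

lemma dir1 (hα : α ∈ Set.Ioc (0:ℝ) 1) (hirr : Irrational x)
    (hpos : ∀ y ∈ Set.Ioc (0 : ℝ) 1, 0 < u y)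
    (hcont : ContinuousOn u (Set.Ioc 0 1))
    (hC1 : ContDiffOn ℝ 1 u (Set.Ioo 0 1))
    (hx2u : ∃ L : ℝ, Tendsto (fun y => y ^ 2 * deriv u y) (nhdsWithin 0 (Set.Ioi 0)) (nhds L))
    (hB1 : Bau 1 u x < ⊤) : Bau α u x < ⊤ := by
  obtain ⟨C₁, hC₁0, hC₁⟩ := u_comp u hcont hC1 hx2u
  obtain ⟨Ms, hMs0, hMs⟩ := sup_bound u hcont (1/2) (by norm_num) (by norm_num)
  set K : ℕ := ⌈(α⁻¹ : ℝ)⌉₊ + 1 with hKdef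
  -- the second component of the state is < K
  have hkK : ∀ n, (st α x n).2 < K := by
    intro n
    obtain ⟨-, -, h3, -⟩ := invariant α x hα hirr n
    rcases hs : st α x n with ⟨m, k⟩
    obtain _ | k := k
    · simp [hKdef]
    · obtain ⟨hay, hk1⟩ := h3 m k hs
      have h := gy_irr_mem x hirr m
      have hd1 : (dg x m : ℝ) < α⁻¹ := by
        have h1 : (dg x m : ℝ) * α ≤ (dg x m : ℝ) * gy x m := by
          apply mul_le_mul_of_nonneg_left hay (Nat.cast_nonneg _)
        have h2 := dg_mul_lt_one x m hirr
        have h3 : (dg x m : ℝ) * α < 1 := lt_of_le_of_lt h1 h2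
        calc (dg x m : ℝ) = (dg x m : ℝ) * α * α⁻¹ := by
              rw [mul_assoc, mul_inv_cancel₀ (ne_of_gt hα.1), mul_one]
          _ < 1 * α⁻¹ := mul_lt_mul_of_pos_right h3 (inv_pos.mpr hα.1)
          _ = α⁻¹ := one_mul _
      have : dg x m ≤ ⌈(α⁻¹ : ℝ)⌉₊ := by
        have := Nat.le_ceil (α⁻¹ : ℝ)
        have h2 : (dg x m : ℝ) < (⌈(α⁻¹ : ℝ)⌉₊ : ℝ) + 1 := by linarith
        exact_mod_cast Nat.lt_succ_iff.mp (by exact_mod_cast h2)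
      simp only [hs]
      omega
  have hι : Function.Injective (fun n => (((st α x n).1, ⟨(st α x n).2, hkK n⟩) : ℕ × Fin K)) := by
    intro a b hab
    apply st_injective α x
    simp only [Prod.mk.injEq, Fin.mk.injEq] at hab
    exact Prod.ext hab.1 hab.2
  set CC : ℝ≥0∞ := ENNReal.ofReal (Ms + 2*C₁) with hCC
  set row : ℕ → ℝ≥0∞ := fun m =>
    ENNReal.ofReal 2 * Tm x u m
      + (ENNReal.ofReal 2 * Tm x u (m+1) + CC * ENNReal.ofReal (Pb x m)) with hrowdef
  have hbound : ∀ n, ENNReal.ofReal ((∏ i ∈ Finset.range n, xfull α x i) * u (xfull α x n))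
      ≤ row (st α x n).1 := by
    intro n
    rw [termA_eq α x u hα hirr n]
    obtain ⟨-, -, h3, -⟩ := invariant α x hα hirr n
    rcases hs : st α x n with ⟨m, k⟩
    simp only [hs]
    obtain _ | k := k
    · -- A-state : exact term
      have hXB : Bp x (m,0) * u (Xs x (m,0)) = Pb x m * u (gy x m) := by
        rw [Bp_zero, Xs_zero]
      rw [hXB]
      have h1 : Tm x u m ≤ ENNReal.ofReal 2 * Tm x u m := by
        nth_rewrite 1 [← one_mul (Tm x u m)]
        exact mul_le_mul_left (ENNReal.one_le_ofReal.mpr (by norm_num)) _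
      exact le_trans h1 le_self_add
    · obtain ⟨hay, hk1⟩ := h3 m k hs
      have hym := gy_irr_mem x hirr m
      have hPb0 := Pb_pos x hirr m
      have hkg : (k:ℝ) * gy x m < 1 := kg_lt_one x hirr m k (by omega)
      have hBp0 : 0 ≤ Bp x (m,k+1) := by
        rw [Bp_succ]; nlinarith
      have hBple : Bp x (m,k+1) ≤ Pb x m := by
        rw [Bp_succ]
        nlinarith [mul_nonneg (Nat.cast_nonneg (α := ℝ) k) hym.2.1.le]
      by_cases hc : k + 2 ≤ dg x m
      · -- mid-state : bounded by constant times Pb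
        obtain ⟨hmem, hhalf⟩ := mid_val_mem x hirr m k hc
        have hu : u (Xs x (m,k+1)) ≤ Ms := le_trans (le_abs_self _) (hMs _ hhalf hmem.2)
        have hu0 : 0 ≤ u (Xs x (m,k+1)) := (hpos _ hmem).le
        have hreal : Bp x (m,k+1) * u (Xs x (m,k+1)) ≤ (Ms + 2*C₁) * Pb x m := by
          nlinarith
        calc ENNReal.ofReal (Bp x (m,k+1) * u (Xs x (m,k+1)))
            ≤ ENNReal.ofReal ((Ms + 2*C₁) * Pb x m) := ENNReal.ofReal_le_ofReal hreal
          _ = CC * ENNReal.ofReal (Pb x m) := by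
              rw [hCC, ← ENNReal.ofReal_mul (by linarith)]
          _ ≤ row m := le_trans (self_le_add_left _ _) (self_le_add_left _ _)
      · -- exit-state
        have hdk : k + 1 = dg x m := by omega
        obtain ⟨hXv, hBv⟩ := exit_val x hirr m k hdk
        have hg2 := gy_irr_mem x hirr (m+1)
        have hW : gy x (m+1) / (1 + gy x (m+1)) ∈ Set.Ioc (0:ℝ) 1 := by
          constructor
          · apply div_pos hg2.2.1; linarith [hg2.2.1]
          · rw [div_le_one (by linarith [hg2.2.1])]; linarith [hg2.2.1]
        have hucomp := hC₁ (gy x (m+1)) hg2.2.1 hg2.2.2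
        have huW : u (gy x (m+1) / (1 + gy x (m+1))) ≤ u (gy x (m+1)) + C₁ := by
          have := (abs_sub_le_iff.mp hucomp).1
          linarith
        have hu0W : 0 ≤ u (gy x (m+1) / (1 + gy x (m+1))) := (hpos _ hW).le
        have hu0g2 : 0 ≤ u (gy x (m+1)) := (hpos _ ⟨hg2.2.1, hg2.2.2.le⟩).le
        have hQ : Pb x (m+1) = Pb x m * gy x m := Pb_succ x m
        have hreal : Bp x (m,k+1) * u (Xs x (m,k+1))
            ≤ 2*(Pb x (m+1) * u (gy x (m+1))) + (2*C₁)*Pb x m := by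
          rw [hXv, hBv, hQ]
          have hfac : 0 ≤ Pb x m * (gy x m * (1 + gy x (m+1))) := by
            apply mul_nonneg hPb0.le
            apply mul_nonneg hym.2.1.le
            linarith [hg2.2.1]
          have step1 : Pb x m * (gy x m * (1 + gy x (m+1))) * u (gy x (m+1) / (1 + gy x (m+1)))
              ≤ Pb x m * (gy x m * (1 + gy x (m+1))) * (u (gy x (m+1)) + C₁) :=
            mul_le_mul_of_nonneg_left huW hfac
          have hgm01 : 0 < gy x m := hym.2.1
          have hgm11 : gy x m ≤ 1 := hym.2.2.le
          have hg21 : gy x (m+1) ≤ 1 := hg2.2.2.le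
          have hle2 : Pb x m * (gy x m * (1 + gy x (m+1))) * (u (gy x (m+1)) + C₁)
              ≤ 2 * (Pb x m * gy x m * u (gy x (m+1))) + 2 * C₁ * Pb x m := by
            have e1 : Pb x m * (gy x m * (1 + gy x (m+1))) * (u (gy x (m+1)) + C₁)
                = (1 + gy x (m+1)) * (Pb x m * gy x m * u (gy x (m+1)))
                  + (gy x m * (1 + gy x (m+1))) * (C₁ * Pb x m) := by ring
            have t1 : (1 + gy x (m+1)) * (Pb x m * gy x m * u (gy x (m+1)))
                ≤ 2 * (Pb x m * gy x m * u (gy x (m+1))) :=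
              mul_le_mul_of_nonneg_right (by linarith)
                (mul_nonneg (mul_nonneg hPb0.le hgm01.le) hu0g2)
            have t2 : (gy x m * (1 + gy x (m+1))) * (C₁ * Pb x m) ≤ 2 * (C₁ * Pb x m) :=
              mul_le_mul_of_nonneg_right (by nlinarith) (mul_nonneg hC₁0 hPb0.le)
            rw [e1]
            nlinarith [t1, t2]
          nlinarith [step1, hle2]
        calc ENNReal.ofReal (Bp x (m,k+1) * u (Xs x (m,k+1)))
            ≤ ENNReal.ofReal (2*(Pb x (m+1) * u (gy x (m+1))) + (2*C₁)*Pb x m) :=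
              ENNReal.ofReal_le_ofReal hreal
          _ ≤ ENNReal.ofReal (2*(Pb x (m+1) * u (gy x (m+1))))
              + ENNReal.ofReal ((2*C₁)*Pb x m) := ENNReal.ofReal_add_le
          _ ≤ ENNReal.ofReal 2 * Tm x u (m+1) + CC * ENNReal.ofReal (Pb x m) := by
              apply add_le_add
              · simp only [Tm]
                rw [← ENNReal.ofReal_mul (by norm_num : (0:ℝ) ≤ 2)]
              · rw [hCC, ← ENNReal.ofReal_mul (by linarith)]
                apply ENNReal.ofReal_le_ofReal
                nlinarith [Pb_pos x hirr m]
          _ ≤ row m := self_le_add_left _ _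
  have hsum1 : Bau α u x ≤ ∑' p : ℕ × Fin K, row p.1 := by
    calc Bau α u x ≤ ∑' n, row (st α x n).1 := ENNReal.tsum_le_tsum hbound
      _ = ∑' n, (fun p : ℕ × Fin K => row p.1) ((((st α x n).1, ⟨(st α x n).2, hkK n⟩)) : ℕ × Fin K) := rfl
      _ ≤ ∑' p : ℕ × Fin K, row p.1 := ENNReal.tsum_comp_le_tsum_of_injective hι _
  have hsum2 : (∑' p : ℕ × Fin K, row p.1) = (K : ℝ≥0∞) * ∑' m, row m := by
    have e1 : (∑' p : ℕ × Fin K, row p.1) = ∑' (a : ℕ), ∑' (_b : Fin K), row a :=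
      ENNReal.tsum_prod (f := fun a (_ : Fin K) => row a)
    rw [e1, ← ENNReal.tsum_mul_left]
    congr 1
    funext m
    rw [tsum_fintype]
    simp [Finset.sum_const, Finset.card_univ, nsmul_eq_mul, mul_comm]
  have hrowsum : (∑' m, row m) ≤ ENNReal.ofReal 2 * Bau 1 u x
      + (ENNReal.ofReal 2 * Bau 1 u x + CC * ∑' m, ENNReal.ofReal (Pb x m)) := by
    rw [hrowdef]
    rw [ENNReal.tsum_add]
    apply add_le_add
    · rw [ENNReal.tsum_mul_left, Bau_one_eq]
    · rw [ENNReal.tsum_add, ENNReal.tsum_mul_left, ENNReal.tsum_mul_left]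
      apply add_le_add
      · apply mul_le_mul_right
        rw [Bau_one_eq]
        exact ENNReal.tsum_comp_le_tsum_of_injective (add_left_injective 1) _
      · exact le_rfl
  have hfin : ENNReal.ofReal 2 * Bau 1 u x
      + (ENNReal.ofReal 2 * Bau 1 u x + CC * ∑' m, ENNReal.ofReal (Pb x m)) < ⊤ := by
    have hS := Sb_lt_top x hirr
    have h2 : ENNReal.ofReal 2 * Bau 1 u x < ⊤ := ENNReal.mul_lt_top ENNReal.ofReal_lt_top hB1
    have h3 : CC * ∑' m, ENNReal.ofReal (Pb x m) < ⊤ :=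
      ENNReal.mul_lt_top ENNReal.ofReal_lt_top hS
    exact ENNReal.add_lt_top.mpr ⟨h2, ENNReal.add_lt_top.mpr ⟨h2, h3⟩⟩
  calc Bau α u x ≤ ∑' p : ℕ × Fin K, row p.1 := hsum1
    _ = (K : ℝ≥0∞) * ∑' m, row m := hsum2
    _ < ⊤ := by
        apply ENNReal.mul_lt_top (ENNReal.natCast_lt_top K)
        exact lt_of_le_of_lt hrowsum hfin

lemma dir2 (hα : α ∈ Set.Ioc (0:ℝ) 1) (hirr : Irrational x)
    (hpos : ∀ y ∈ Set.Ioc (0 : ℝ) 1, 0 < u y)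
    (hcont : ContinuousOn u (Set.Ioc 0 1))
    (hC1 : ContDiffOn ℝ 1 u (Set.Ioo 0 1))
    (hx2u : ∃ L : ℝ, Tendsto (fun y => y ^ 2 * deriv u y) (nhdsWithin 0 (Set.Ioi 0)) (nhds L))
    (hBa : Bau α u x < ⊤) : Bau 1 u x < ⊤ := by
  obtain ⟨C₁, hC₁0, hC₁⟩ := u_comp u hcont hC1 hx2u
  obtain ⟨Mα, hMα0, hMα⟩ := sup_bound u hcont α hα.1 hα.2
  set termA : ℕ → ℝ≥0∞ :=
    fun n => ENNReal.ofReal ((∏ i ∈ Finset.range n, xfull α x i) * u (xfull α x n)) with htermA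
  have hBau : Bau α u x = ∑' n, termA n := rfl
  -- covering lemma
  have cover : ∀ m, gy x m < α → ∃ n,
      (st α x n = (m,0) ∨ ∃ m', m'+1 = m ∧ st α x n = (m', dg x m')) ∧
      Tm x u m ≤ termA n + ENNReal.ofReal (C₁ * Pb x m) := by
    intro m hP2
    rcases reach α x hirr m with ⟨n, hn0 | hn1⟩ | ⟨hm1, n, hn⟩
    · refine ⟨n, Or.inl hn0, ?_⟩
      have he : termA n = Tm x u m := by
        simp only [htermA]
        rw [termA_eq α x u hα hirr n, hn0, Bp_zero, Xs_zero]
        rfl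
      rw [he]
      exact le_self_add
    · exfalso
      obtain ⟨-, -, h3, -⟩ := invariant α x hα hirr n
      obtain ⟨hay, -⟩ := h3 m 0 hn1
      exact absurd hay (not_le.mpr hP2)
    · obtain ⟨m', rfl⟩ : ∃ m', m = m' + 1 := ⟨m - 1, by omega⟩
      have hmm : m' + 1 - 1 = m' := by omega
      rw [hmm] at hn
      obtain ⟨k, hdk⟩ : ∃ k, k + 1 = dg x m' :=
        ⟨dg x m' - 1, by have := dg_pos x m' hirr; omega⟩
      rw [← hdk] at hn
      refine ⟨n, Or.inr ⟨m', rfl, by rw [hn, hdk]⟩, ?_⟩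
      obtain ⟨hXv, hBv⟩ := exit_val x hirr m' k hdk
      have hterm : termA n = ENNReal.ofReal
          (Pb x m' * (gy x m' * (1 + gy x (m'+1))) * u (gy x (m'+1) / (1 + gy x (m'+1)))) := by
        simp only [htermA]
        rw [termA_eq α x u hα hirr n, hn, hBv, hXv]
      have hg1 := gy_irr_mem x hirr m'
      have hg2 := gy_irr_mem x hirr (m'+1)
      have hP'0 := Pb_pos x hirr m'
      have hW : gy x (m'+1) / (1 + gy x (m'+1)) ∈ Set.Ioc (0:ℝ) 1 := by
        constructor
        · apply div_pos hg2.2.1; linarith [hg2.2.1]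
        · rw [div_le_one (by linarith [hg2.2.1])]; linarith [hg2.2.1]
      have hu0W : 0 ≤ u (gy x (m'+1) / (1 + gy x (m'+1))) := (hpos _ hW).le
      have hucomp := hC₁ (gy x (m'+1)) hg2.2.1 hg2.2.2
      have hug : u (gy x (m'+1)) ≤ u (gy x (m'+1) / (1 + gy x (m'+1))) + C₁ := by
        have := (abs_sub_le_iff.mp hucomp).2
        linarith
      have hQ : Pb x (m'+1) = Pb x m' * gy x m' := Pb_succ x m'
      have hreal : Pb x (m'+1) * u (gy x (m'+1))
          ≤ Pb x m' * (gy x m' * (1 + gy x (m'+1))) * u (gy x (m'+1) / (1 + gy x (m'+1)))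
            + C₁ * Pb x (m'+1) := by
        have h1 : Pb x (m'+1) * u (gy x (m'+1))
            ≤ Pb x (m'+1) * (u (gy x (m'+1) / (1 + gy x (m'+1))) + C₁) := by
          apply mul_le_mul_of_nonneg_left hug
          nlinarith [hg1.2.1]
        have h2 : Pb x (m'+1) * u (gy x (m'+1) / (1 + gy x (m'+1)))
            ≤ Pb x m' * (gy x m' * (1 + gy x (m'+1))) * u (gy x (m'+1) / (1 + gy x (m'+1))) := by
          apply mul_le_mul_of_nonneg_right _ hu0W
          rw [hQ]
          nlinarith [mul_nonneg (mul_nonneg hP'0.le hg1.2.1.le) hg2.2.1.le]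
        nlinarith [h1, h2]
      calc Tm x u (m'+1)
          ≤ ENNReal.ofReal (Pb x m' * (gy x m' * (1 + gy x (m'+1)))
              * u (gy x (m'+1) / (1 + gy x (m'+1))) + C₁ * Pb x (m'+1)) :=
            ENNReal.ofReal_le_ofReal hreal
        _ ≤ ENNReal.ofReal (Pb x m' * (gy x m' * (1 + gy x (m'+1)))
              * u (gy x (m'+1) / (1 + gy x (m'+1)))) + ENNReal.ofReal (C₁ * Pb x (m'+1)) :=
            ENNReal.ofReal_add_le
        _ ≤ termA n + ENNReal.ofReal (C₁ * Pb x (m'+1)) := by rw [hterm]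
  -- the selection map and its injectivity
  classical
  set σ : {m // gy x m < α} → ℕ := fun s => Classical.choose (cover s.1 s.2) with hσdef
  have hσspec : ∀ s : {m // gy x m < α},
      (st α x (σ s) = (s.1, 0) ∨ ∃ m', m'+1 = s.1 ∧ st α x (σ s) = (m', dg x m')) ∧
      Tm x u s.1 ≤ termA (σ s) + ENNReal.ofReal (C₁ * Pb x s.1) :=
    fun s => Classical.choose_spec (cover s.1 s.2)
  have hσinj : Function.Injective σ := by
    intro s s' hss
    apply Subtype.ext
    have h1 := (hσspec s).1
    have h2 := (hσspec s').1
    rw [hss] at h1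
    rcases h1 with ha | ⟨m1, hm1, ha⟩ <;> rcases h2 with hb | ⟨m2, hm2, hb⟩
    · rw [ha] at hb
      injection hb with h h'
    · rw [ha] at hb
      injection hb with _ h
      have := dg_pos x m2 hirr
      omega
    · rw [ha] at hb
      injection hb with _ h
      have := dg_pos x m1 hirr
      omega
    · rw [ha] at hb
      injection hb with h _
      omega
  set H : ℕ → ℝ≥0∞ := fun m =>
    if h : gy x m < α then termA (σ ⟨m, h⟩) else 0 with hHdef
  have hTmH : ∀ m, Tm x u m ≤ ENNReal.ofReal ((Mα + C₁) * Pb x m) + H m := by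
    intro m
    by_cases h : gy x m < α
    · have := (hσspec ⟨m, h⟩).2
      have hH : H m = termA (σ ⟨m, h⟩) := dif_pos h
      rw [hH]
      calc Tm x u m ≤ termA (σ ⟨m, h⟩) + ENNReal.ofReal (C₁ * Pb x m) := this
        _ ≤ termA (σ ⟨m, h⟩) + ENNReal.ofReal ((Mα + C₁) * Pb x m) := by
            apply add_le_add_right
            apply ENNReal.ofReal_le_ofReal
            nlinarith [Pb_pos x hirr m]
        _ = ENNReal.ofReal ((Mα + C₁) * Pb x m) + termA (σ ⟨m, h⟩) := add_comm _ _
    · push_neg at h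
      have hym := gy_irr_mem x hirr m
      have hu : u (gy x m) ≤ Mα := le_trans (le_abs_self _) (hMα _ h hym.2.2.le)
      have hu0 : 0 ≤ u (gy x m) := (hpos _ ⟨hym.2.1, hym.2.2.le⟩).le
      have : Tm x u m ≤ ENNReal.ofReal ((Mα + C₁) * Pb x m) := by
        apply ENNReal.ofReal_le_ofReal
        nlinarith [Pb_pos x hirr m]
      exact le_trans this le_self_add
  have hHsum : (∑' m, H m) ≤ Bau α u x := by
    have hsupp : Function.support H ⊆ {m | gy x m < α} := by
      intro m hm
      by_contra hcon
      apply hm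
      rw [hHdef]
      exact dif_neg hcon
    have e1 : (∑' s : {m | gy x m < α}, H s.1) = ∑' m, H m :=
      tsum_subtype_eq_of_support_subset hsupp
    rw [← e1]
    have e2 : ∀ s : {m // gy x m < α}, H s.1 = termA (σ s) := by
      intro s
      rw [hHdef]
      exact dif_pos s.2
    calc (∑' s : {m | gy x m < α}, H s.1) = ∑' s : {m // gy x m < α}, termA (σ s) := by
          apply tsum_congr
          intro s
          exact e2 s
      _ ≤ ∑' n, termA n := ENNReal.tsum_comp_le_tsum_of_injective hσinj _
      _ = Bau α u x := hBau.symm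
  calc Bau 1 u x = ∑' m, Tm x u m := Bau_one_eq x u
    _ ≤ ∑' m, (ENNReal.ofReal ((Mα + C₁) * Pb x m) + H m) := ENNReal.tsum_le_tsum hTmH
    _ = (∑' m, ENNReal.ofReal ((Mα + C₁) * Pb x m)) + ∑' m, H m := ENNReal.tsum_add
    _ ≤ ENNReal.ofReal (Mα + C₁) * (∑' m, ENNReal.ofReal (Pb x m)) + Bau α u x := by
        apply add_le_add _ hHsum
        apply le_of_eq
        rw [← ENNReal.tsum_mul_left]
        apply tsum_congr
        intro m
        rw [← ENNReal.ofReal_mul (by linarith)]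
    _ < ⊤ := by
        apply ENNReal.add_lt_top.mpr
        exact ⟨ENNReal.mul_lt_top ENNReal.ofReal_lt_top (Sb_lt_top x hirr), hBa⟩

end Directions

end BrjunoProof

/-- For every `α ∈ (0,1]`, every admissible `u`, and every irrational `x`,
`B_{α,u}(x) < ∞` iff `B_{1,u}(x) < ∞`: the set of `(α,u)`-Brjuno numbers does not
depend on `α ∈ (0,1]`. -/
theorem Bau_finite_iff (α : ℝ) (hα : α ∈ Set.Ioc (0 : ℝ) 1)
    (u : ℝ → ℝ)
    (hpos : ∀ y ∈ Set.Ioc (0 : ℝ) 1, 0 < u y)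
    (hcont : ContinuousOn u (Set.Ioc 0 1))
    (hC1 : ContDiffOn ℝ 1 u (Set.Ioo 0 1))
    (htop : Tendsto u (nhdsWithin 0 (Set.Ioi 0)) atTop)
    (hxu : ∃ L : ℝ, Tendsto (fun y => y * u y) (nhdsWithin 0 (Set.Ioi 0)) (nhds L))
    (hx2u : ∃ L : ℝ, Tendsto (fun y => y ^ 2 * deriv u y) (nhdsWithin 0 (Set.Ioi 0)) (nhds L))
    (x : ℝ) (hirr : Irrational x) :
    Bau α u x < ⊤ ↔ Bau 1 u x < ⊤ := by
  constructor
  · intro h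
    exact BrjunoProof.dir2 α x u hα hirr hpos hcont hC1 hx2u h
  · intro h
    exact BrjunoProof.dir1 α x u hα hirr hpos hcont hC1 hx2u h
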